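/- Let X have skinny SVD X = UΣVᵀ with r = rank(X). Among all n×n matrices Z satisfying X = XZ, the matrix Z* = VVᵀ minimizes the nuclear norm ‖Z‖_*, and the minimum value is r. -/

import Mathlib

open Matrix

/-- The nuclear norm of a real matrix: the sum of its singular values,
where the singular values are the square roots of the eigenvalues of `Aᴴ * A`. -/
noncomputable def nuclearNorm {m n : ℕ} (A : Matrix (Fin m) (Fin n) ℝ) : ℝ :=
  ∑ i, Real.sqrt ((Matrix.isHermitian_conjTranspose_mul_self A).eigenvalues i)

private lemma dot_self_nonneg {n : ℕ} (v : Fin n → ℝ) : 0 ≤ v ⬝ᵥ v :=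
  Finset.sum_nonneg fun i _ => mul_self_nonneg _

/-- Multiplication by `Vᵀ` (with `VᵀV = 1`) does not increase the norm. -/
private lemma contract {n r : ℕ} (V : Matrix (Fin n) (Fin r) ℝ) (hV : Vᵀ * V = 1)
    (y : Fin n → ℝ) : (Vᵀ *ᵥ y) ⬝ᵥ (Vᵀ *ᵥ y) ≤ y ⬝ᵥ y := by
  set a := Vᵀ *ᵥ y with ha
  have h1 : y ⬝ᵥ (V *ᵥ a) = a ⬝ᵥ a := by
    rw [dotProduct_mulVec, ← mulVec_transpose, ← ha]
  have h2 : (V *ᵥ a) ⬝ᵥ (V *ᵥ a) = a ⬝ᵥ a := by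
    rw [dotProduct_mulVec, ← mulVec_transpose, mulVec_mulVec, hV, one_mulVec]
  set p := V *ᵥ a with hp
  have h3 : (0:ℝ) ≤ (y - p) ⬝ᵥ (y - p) := dot_self_nonneg _
  have h4 : y ⬝ᵥ p = p ⬝ᵥ y := dotProduct_comm _ _
  have hexp : (y - p) ⬝ᵥ (y - p) = y ⬝ᵥ y - y ⬝ᵥ p - p ⬝ᵥ y + p ⬝ᵥ p := by
    simp [sub_dotProduct, dotProduct_sub]; ring
  linarith

/-- Diagonal entry of a conjugation. -/
private lemma diag_entry {n : ℕ} (W A : Matrix (Fin n) (Fin n) ℝ) (i : Fin n) :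
    (star W * A * W) i i = (fun j => W j i) ⬝ᵥ (A *ᵥ fun j => W j i) := by
  simp only [Matrix.mul_apply, Matrix.mulVec, dotProduct, Matrix.star_apply,
    star_trivial, Finset.sum_mul, Finset.mul_sum]
  rw [Finset.sum_comm]
  exact Finset.sum_congr rfl fun j _ => Finset.sum_congr rfl fun k _ => by ring

/-- Key inequality: if `VᵀV = 1` and `VᵀZ = Vᵀ`, then `r ≤ ‖Z‖₊`. -/
private lemma key_ineq {n r : ℕ} (Z : Matrix (Fin n) (Fin n) ℝ)
    (V : Matrix (Fin n) (Fin r) ℝ) (hV : Vᵀ * V = 1) (hVZ : Vᵀ * Z = Vᵀ) :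
    (r : ℝ) ≤ nuclearNorm Z := by
  classical
  have hH : (Zᴴ * Z).IsHermitian := isHermitian_conjTranspose_mul_self Z
  set W : Matrix (Fin n) (Fin n) ℝ := (hH.eigenvectorUnitary : Matrix (Fin n) (Fin n) ℝ)
    with hWdef
  have hsWW : star W * W = 1 := Unitary.coe_star_mul_self hH.eigenvectorUnitary
  have hWsW : W * star W = 1 := Unitary.coe_mul_star_self hH.eigenvectorUnitary
  set w : Fin n → (Fin n → ℝ) := fun i j => W j i with hw
  -- each column is an eigenvector
  have heig : ∀ i, (Zᴴ * Z) *ᵥ w i = hH.eigenvalues i • w i := by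
    intro i
    have := hH.mulVec_eigenvectorBasis i
    convert this using 2
    all_goals rfl
  -- columns are unit vectors
  have hwnorm : ∀ i, w i ⬝ᵥ w i = 1 := by
    intro i
    have := congrFun (congrFun hsWW i) i
    simpa [Matrix.mul_apply, Matrix.one_apply, dotProduct, Matrix.star_apply] using this
  -- ‖Z (w i)‖² = eigenvalue
  have hZw : ∀ i, (Z *ᵥ w i) ⬝ᵥ (Z *ᵥ w i) = hH.eigenvalues i := by
    intro i
    have h1 : w i ⬝ᵥ ((Zᴴ * Z) *ᵥ w i) = (Z *ᵥ w i) ⬝ᵥ (Z *ᵥ w i) := by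
      rw [conjTranspose_eq_transpose_of_trivial, ← mulVec_mulVec, dotProduct_mulVec,
        ← mulVec_transpose, transpose_transpose]
    rw [← h1, heig i, dotProduct_smul, smul_eq_mul, hwnorm i, mul_one]
  -- trace identity
  have htrace : (r : ℝ) = ∑ i, (star W * (V * Vᵀ * Z) * W) i i := by
    have e1 : ∑ i, (star W * (V * Vᵀ * Z) * W) i i = (star W * (V * Vᵀ * Z) * W).trace := by
      simp [Matrix.trace, Matrix.diag]
    have e2 : (star W * (V * Vᵀ * Z) * W).trace = (V * Vᵀ * Z).trace := by
      rw [Matrix.trace_mul_cycle, hWsW, Matrix.one_mul]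
    have e3 : (V * Vᵀ * Z).trace = (Vᵀ * Z * V).trace :=
      (Matrix.trace_mul_cycle Vᵀ Z V).symm
    have e4 : Vᵀ * Z * V = 1 := by rw [hVZ, hV]
    rw [e1, e2, e3, e4, Matrix.trace_one]
    simp
  -- entrywise bound
  have hbound : ∀ i, (star W * (V * Vᵀ * Z) * W) i i ≤ Real.sqrt (hH.eigenvalues i) := by
    intro i
    rw [diag_entry]
    have hsplit : (V * Vᵀ * Z) *ᵥ w i = V *ᵥ (Vᵀ *ᵥ (Z *ᵥ w i)) := by
      rw [mulVec_mulVec, mulVec_mulVec, Matrix.mul_assoc]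
    rw [hsplit]
    set a := Vᵀ *ᵥ w i with ha
    set b := Vᵀ *ᵥ (Z *ᵥ w i) with hb
    have hdp : w i ⬝ᵥ (V *ᵥ b) = a ⬝ᵥ b := by
      rw [dotProduct_mulVec, ← mulVec_transpose, ← ha]
    rw [hdp]
    have haa : a ⬝ᵥ a ≤ 1 := by
      have := contract V hV (w i); rw [← ha] at this; rw [hwnorm i] at this; exact this
    have hbb : b ⬝ᵥ b ≤ hH.eigenvalues i := by
      have := contract V hV (Z *ᵥ w i); rw [← hb, hZw i] at this; exact this
    have hcs : a ⬝ᵥ b ≤ Real.sqrt (a ⬝ᵥ a) * Real.sqrt (b ⬝ᵥ b) := by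
      have := Real.sum_mul_le_sqrt_mul_sqrt Finset.univ a b
      simpa [dotProduct, sq] using this
    have h1 : Real.sqrt (a ⬝ᵥ a) ≤ 1 := by
      rw [show (1:ℝ) = Real.sqrt 1 by simp]
      exact Real.sqrt_le_sqrt haa
    have h2 : Real.sqrt (b ⬝ᵥ b) ≤ Real.sqrt (hH.eigenvalues i) := Real.sqrt_le_sqrt hbb
    calc a ⬝ᵥ b ≤ Real.sqrt (a ⬝ᵥ a) * Real.sqrt (b ⬝ᵥ b) := hcs
      _ ≤ 1 * Real.sqrt (hH.eigenvalues i) := by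
          exact mul_le_mul h1 h2 (Real.sqrt_nonneg _) zero_le_one
      _ = Real.sqrt (hH.eigenvalues i) := one_mul _
  calc (r : ℝ) = ∑ i, (star W * (V * Vᵀ * Z) * W) i i := htrace
    _ ≤ ∑ i, Real.sqrt (hH.eigenvalues i) := Finset.sum_le_sum fun i _ => hbound i
    _ = nuclearNorm Z := rfl

/-- Nuclear norm of the projection `V * Vᵀ` is `r`. -/
private lemma nuclearNorm_proj {n r : ℕ} (V : Matrix (Fin n) (Fin r) ℝ)
    (hV : Vᵀ * V = 1) : nuclearNorm (V * Vᵀ) = (r : ℝ) := by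
  classical
  set P : Matrix (Fin n) (Fin n) ℝ := V * Vᵀ with hPdef
  have hPidem : P * P = P := by
    rw [hPdef, Matrix.mul_assoc, ← Matrix.mul_assoc Vᵀ V Vᵀ, hV, Matrix.one_mul]
  have hPH : Pᴴ = P := by
    rw [conjTranspose_eq_transpose_of_trivial, hPdef, transpose_mul, transpose_transpose]
  have hM : Pᴴ * P = P := by rw [hPH, hPidem]
  have hH : (Pᴴ * P).IsHermitian := isHermitian_conjTranspose_mul_self P
  -- the eigenvalues are 0 or 1
  have heigval : ∀ i, Real.sqrt (hH.eigenvalues i) = hH.eigenvalues i := by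
    intro i
    set lam := hH.eigenvalues i with hlam
    have hev : (Pᴴ * P) *ᵥ ⇑(hH.eigenvectorBasis i) = lam • ⇑(hH.eigenvectorBasis i) :=
      hH.mulVec_eigenvectorBasis i
    have hidem : (Pᴴ * P) * (Pᴴ * P) = Pᴴ * P := by rw [hM, hPidem]
    have hsq : (lam * lam) • ⇑(hH.eigenvectorBasis i) = lam • ⇑(hH.eigenvectorBasis i) := by
      have : (Pᴴ * P) *ᵥ ((Pᴴ * P) *ᵥ ⇑(hH.eigenvectorBasis i))
          = (Pᴴ * P) *ᵥ ⇑(hH.eigenvectorBasis i) := by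
        rw [mulVec_mulVec, hidem]
      rw [hev, mulVec_smul, hev, smul_smul] at this
      exact this
    have hvne : ⇑(hH.eigenvectorBasis i) ≠ 0 := by
      intro h
      exact hH.eigenvectorBasis.orthonormal.ne_zero i (by ext j; exact congrFun h j)
    obtain ⟨j, hj⟩ := Function.ne_iff.mp hvne
    have : lam * lam = lam := by
      have := congrFun hsq j
      simp only [Pi.smul_apply, smul_eq_mul] at this
      exact mul_right_cancel₀ hj this
    have hfac : lam * (lam - 1) = 0 := by ring_nf; linarith
    rcases mul_eq_zero.mp hfac with h | h
    · rw [h]; simp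
    · have h1 : lam = 1 := by linarith [sub_eq_zero.mp h]
      rw [h1]; simp
  have htr : ∑ i, hH.eigenvalues i = (r : ℝ) := by
    have hspec := hH.spectral_theorem
    have : (Pᴴ * P).trace = ∑ i, hH.eigenvalues i := by
      conv_lhs => rw [hspec]
      rw [Unitary.conjStarAlgAut_apply, Matrix.trace_mul_cycle]
      rw [Unitary.coe_star_mul_self hH.eigenvectorUnitary, Matrix.one_mul, Matrix.trace_diagonal]
      simp
    conv at this => lhs; rw [hM]
    have htrP : P.trace = (r : ℝ) := by
      rw [hPdef, Matrix.trace_mul_comm, hV, Matrix.trace_one]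
      simp
    exact this.symm.trans htrP
  unfold nuclearNorm
  rw [← htr]
  exact Finset.sum_congr rfl fun i _ => heigval i

/-- Among all feasible self-representations `Z` (i.e. `X = X * Z`), the matrix
`V * Vᵀ` from the skinny SVD minimizes the nuclear norm, and the minimum value
is `r = rank X`. -/
theorem skinny_svd_minimizes_nuclear_norm
    {m n r : ℕ}
    (X : Matrix (Fin m) (Fin n) ℝ)
    (U : Matrix (Fin m) (Fin r) ℝ)
    (d : Fin r → ℝ)
    (V : Matrix (Fin n) (Fin r) ℝ)
    (hd : ∀ i, 0 < d i)
    (hU : Uᵀ * U = 1)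
    (hV : Vᵀ * V = 1)
    (hX : X = U * Matrix.diagonal d * Vᵀ)
    (hr : r = X.rank) :
    (X = X * (V * Vᵀ)) ∧
    (∀ Z : Matrix (Fin n) (Fin n) ℝ, X = X * Z →
      nuclearNorm (V * Vᵀ) ≤ nuclearNorm Z) ∧
    nuclearNorm (V * Vᵀ) = (r : ℝ) := by
  have hfix : X * (V * Vᵀ) = X := by
    rw [hX, Matrix.mul_assoc, ← Matrix.mul_assoc Vᵀ V Vᵀ, hV, Matrix.one_mul]
  refine ⟨hfix.symm, ?_, nuclearNorm_proj V hV⟩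
  intro Z hXZ
  have hXZ' : U * Matrix.diagonal d * Vᵀ = U * Matrix.diagonal d * Vᵀ * Z := by
    rw [← hX]; exact hXZ
  have h2 : Matrix.diagonal d * Vᵀ = Matrix.diagonal d * Vᵀ * Z := by
    have := congrArg (fun M => Uᵀ * M) hXZ'
    simpa [← Matrix.mul_assoc, hU] using this
  have hDinv : Matrix.diagonal (fun i => (d i)⁻¹) * Matrix.diagonal d = 1 := by
    rw [Matrix.diagonal_mul_diagonal]
    ext i j
    by_cases h : i = j
    · subst h
      simp [inv_mul_cancel₀ (hd i).ne']
    · simp [Matrix.diagonal_apply_ne _ h, Matrix.one_apply_ne h]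
  have h3 : Vᵀ * Z = Vᵀ := by
    have := congrArg (fun M => Matrix.diagonal (fun i => (d i)⁻¹) * M) h2
    simp only [← Matrix.mul_assoc] at this
    rw [hDinv, Matrix.one_mul] at this
    exact this.symm
  rw [nuclearNorm_proj V hV]
  exact key_ineq Z V hV h3
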